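/- Let S be a finite set, Q a real S×S matrix, {E_1,…,E_n} a partition of S, V the associated S×{1,…,n} 0-1 inclusion matrix, and Q̄ an n×n matrix with Q·V = V·Q̄. Let μ be a probability vector on S and let μ̄ be the induced vector on {1,…,n}, μ̄_k = ∑_{i∈E_k} μ_i (equivalently μ̄ = μ·V). If μ̄·Q̄ = -α·μ̄ for some α > 0, then ∑_{k} (μ·exp(tQ)·V)_k = e^{-αt} for all t ≥ 0, and moreover μ·exp(tQ)·V = e^{-αt}·μ̄ for all t ≥ 0. -/

import Mathlib

open Matrix

private lemma vecMul_smulMatrix {m n : Type} [Fintype m] (v : m → ℝ) (r : ℝ)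
    (M : Matrix m n ℝ) : v ᵥ* (r • M) = r • (v ᵥ* M) := by
  ext j
  simp [Matrix.vecMul, dotProduct, Finset.mul_sum, mul_left_comm]

theorem stmt_10 (S K : Type) [Fintype S] [DecidableEq S] [Fintype K] [DecidableEq K]
    (Q : Matrix S S ℝ) (c : S → K)
    (V : Matrix S K ℝ) (hV : ∀ i k, V i k = if c i = k then 1 else 0)
    (Qbar : Matrix K K ℝ) (hlump : Q * V = V * Qbar)
    (μ : S → ℝ) (hμ : ∀ i, 0 ≤ μ i) (hμ1 : ∑ i, μ i = 1)
    (μbar : K → ℝ) (hμbar : μbar = μ ᵥ* V)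
    (α : ℝ) (hα : 0 < α)
    (heig : μbar ᵥ* Qbar = -α • μbar) :
    ∀ t : ℝ, 0 ≤ t →
      (∑ k, ((μ ᵥ* NormedSpace.exp (t • Q)) ᵥ* V) k = Real.exp (-α * t)) ∧
      (μ ᵥ* NormedSpace.exp (t • Q)) ᵥ* V = Real.exp (-α * t) • μbar := by
  letI : NormedRing (Matrix S S ℝ) := Matrix.linftyOpNormedRing
  letI : NormedAlgebra ℝ (Matrix S S ℝ) := Matrix.linftyOpNormedAlgebra
  have hpow : ∀ n : ℕ, Q ^ n * V = V * Qbar ^ n := by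
    intro n
    induction n with
    | zero => simp
    | succ n ih =>
      rw [pow_succ', pow_succ', Matrix.mul_assoc, ih, ← Matrix.mul_assoc, hlump,
        Matrix.mul_assoc]
  have heign : ∀ n : ℕ, μbar ᵥ* Qbar ^ n = ((-α) ^ n) • μbar := by
    intro n
    induction n with
    | zero => simp
    | succ n ih =>
      rw [pow_succ, ← Matrix.vecMul_vecMul, ih, Matrix.smul_vecMul, heig, smul_smul,
        pow_succ]
  intro t ht
  -- the continuous linear map  M ↦ (μ ᵥ* M) ᵥ* V
  let f : Matrix S S ℝ →ₗ[ℝ] (K → ℝ) :=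
    { toFun := fun M => (μ ᵥ* M) ᵥ* V
      map_add' := by intro x y; simp [Matrix.vecMul_add, Matrix.add_vecMul]
      map_smul' := by
        intro r x
        simp [vecMul_smulMatrix, Matrix.smul_vecMul] }
  let F : Matrix S S ℝ →L[ℝ] (K → ℝ) := ⟨f, f.continuous_of_finiteDimensional⟩
  have hsum : Summable fun n : ℕ => ((n.factorial : ℝ))⁻¹ • (t • Q) ^ n :=
    NormedSpace.expSeries_summable' (t • Q)
  have hterm : ∀ n : ℕ, F (((n.factorial : ℝ))⁻¹ • (t • Q) ^ n)
      = (((n.factorial : ℝ))⁻¹ * (-α * t) ^ n) • μbar := by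
    intro n
    have h1 : F (((n.factorial : ℝ))⁻¹ • (t • Q) ^ n)
        = ((n.factorial : ℝ))⁻¹ • ((μ ᵥ* (t • Q) ^ n) ᵥ* V) := F.map_smul _ _
    have h2 : (μ ᵥ* (t • Q) ^ n) ᵥ* V = μ ᵥ* ((t • Q) ^ n * V) := by
      rw [Matrix.vecMul_vecMul]
    have h3 : (t • Q) ^ n * V = V * (t ^ n • Qbar ^ n) := by
      rw [smul_pow, Matrix.smul_mul, hpow, Matrix.mul_smul]
    have h4 : μ ᵥ* (V * (t ^ n • Qbar ^ n)) = μbar ᵥ* (t ^ n • Qbar ^ n) := by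
      rw [← Matrix.vecMul_vecMul, hμbar]
    have h5 : μbar ᵥ* (t ^ n • Qbar ^ n) = ((-α * t) ^ n) • μbar := by
      rw [vecMul_smulMatrix, heign, smul_smul, mul_pow, mul_comm]
    rw [h1, h2, h3, h4, h5, smul_smul]
  have hmain : (μ ᵥ* NormedSpace.exp (t • Q)) ᵥ* V = Real.exp (-α * t) • μbar := by
    have hHS := hsum.hasSum.mapL F
    have hexp : F (NormedSpace.exp (t • Q))
        = ∑' n : ℕ, F (((n.factorial : ℝ))⁻¹ • (t • Q) ^ n) := by
      rw [NormedSpace.exp_eq_tsum ℝ]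
      exact hHS.tsum_eq.symm
    have hL : (μ ᵥ* NormedSpace.exp (t • Q)) ᵥ* V = F (NormedSpace.exp (t • Q)) := rfl
    have hsum2 : Summable fun n : ℕ => ((n.factorial : ℝ))⁻¹ * (-α * t) ^ n := by
      simpa [smul_eq_mul] using NormedSpace.expSeries_summable' (𝕂 := ℝ) (-α * t)
    rw [hL, hexp]
    calc (∑' n : ℕ, F (((n.factorial : ℝ))⁻¹ • (t • Q) ^ n))
        = ∑' n : ℕ, (((n.factorial : ℝ))⁻¹ * (-α * t) ^ n) • μbar :=
          tsum_congr fun n => hterm n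
      _ = (∑' n : ℕ, ((n.factorial : ℝ))⁻¹ * (-α * t) ^ n) • μbar :=
          Summable.tsum_smul_const hsum2 μbar
      _ = Real.exp (-α * t) • μbar := by
          congr 1
          rw [Real.exp_eq_exp_ℝ, NormedSpace.exp_eq_tsum ℝ]
          simp [smul_eq_mul]
  refine ⟨?_, hmain⟩
  have hμbarsum : ∑ k, μbar k = 1 := by
    rw [hμbar]
    calc ∑ k, (μ ᵥ* V) k = ∑ k, ∑ i, μ i * V i k := by
          simp [Matrix.vecMul, dotProduct]
      _ = ∑ i, ∑ k, μ i * V i k := Finset.sum_comm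
      _ = ∑ i, μ i := by
          refine Finset.sum_congr rfl fun i _ => ?_
          simp [hV, mul_ite, Finset.sum_ite_eq']
      _ = 1 := hμ1
  rw [hmain]
  simp [← Finset.mul_sum, hμbarsum]
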